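/- Let φ : 𝔥 → 𝔤 be a crossed module of Lie algebras, with 𝔤 acting on 𝔥 by derivations such that φ(x · a) = [x, φ(a)] and φ(a) · b = [a, b] for x ∈ 𝔤, a, b ∈ 𝔥. Then the semidirect product Lie algebra 𝔥 ⋊ 𝔤, with source map s(a, x) = x, target map t(a, x) = φ(a) + x, unit map u(x) = (0, x), and multiplication m((a, φ(b) + x), (b, x)) = (a + b, x), is a groupoid over 𝔤 in which all structure maps are Lie algebra morphisms. -/

import Mathlib

/-- For a crossed module of Lie algebras `φ : 𝔥 → 𝔤` (with `𝔤` acting on `𝔥`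
by derivations satisfying `φ(x·a) = [x, φ a]` and `φ(a)·b = [a,b]`), the semidirect product
bracket on `𝔥 × 𝔤`, together with the source `s(a,x) = x`, target `t(a,x) = φ a + x`, unit
`u(x) = (0,x)` and multiplication `m((a, φ b + x), (b, x)) = (a + b, x)`, is a groupoid over
`𝔤` all of whose structure maps are Lie algebra morphisms (and the semidirect bracket is a
Lie bracket). -/
theorem crossedModule_gives_lie_two_algebra
    {H G : Type*} [LieRing H] [LieAlgebra ℝ H] [LieRing G] [LieAlgebra ℝ G]
    (φ : H →ₗ⁅ℝ⁆ G) (ρ : G →ₗ[ℝ] H →ₗ[ℝ] H)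
    (hder : ∀ (x : G) (a b : H), ρ x ⁅a, b⁆ = ⁅ρ x a, b⁆ + ⁅a, ρ x b⁆)
    (hact : ∀ (x y : G) (a : H), ρ ⁅x, y⁆ a = ρ x (ρ y a) - ρ y (ρ x a))
    (hequiv : ∀ (x : G) (a : H), φ (ρ x a) = ⁅x, φ a⁆)
    (hpeiffer : ∀ a b : H, ρ (φ a) b = ⁅a, b⁆)
    -- the semidirect product bracket, and the groupoid structure maps
    (br : (H × G) → (H × G) → (H × G))
    (hbr : ∀ p q, br p q = (⁅p.1, q.1⁆ + ρ p.2 q.1 - ρ q.2 p.1, ⁅p.2, q.2⁆))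
    (s t : (H × G) → G) (u : G → H × G) (m : (H × G) → (H × G) → (H × G))
    (hs : ∀ p, s p = p.2) (ht : ∀ p, t p = φ p.1 + p.2)
    (hu : ∀ x, u x = ((0 : H), x)) (hm : ∀ p q, m p q = (p.1 + q.1, q.2)) :
    -- `br` is a Lie bracket (skew-symmetry and the Leibniz/Jacobi identity)
    ((∀ p, br p p = 0) ∧
     (∀ p q, br p q = - br q p) ∧
     (∀ p q r, br p (br q r) = br (br p q) r + br q (br p r))) ∧
    -- the groupoid axioms hold (on composable pairs, composability being `s p = t q`)
    ((∀ x, s (u x) = x) ∧ (∀ x, t (u x) = x) ∧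
     (∀ p q, s p = t q → s (m p q) = s q) ∧
     (∀ p q, s p = t q → t (m p q) = t p) ∧
     (∀ p, m p (u (s p)) = p) ∧ (∀ p, m (u (t p)) p = p) ∧
     (∀ p q r, s p = t q → s q = t r → m (m p q) r = m p (m q r)) ∧
     (∀ p, ∃ i : H × G, s i = t p ∧ t i = s p ∧ m p i = u (t p) ∧ m i p = u (s p))) ∧
    -- all structure maps are Lie algebra morphisms
    ((∀ p q, s (br p q) = ⁅s p, s q⁆) ∧
     (∀ p q, t (br p q) = ⁅t p, t q⁆) ∧
     (∀ x y : G, u ⁅x, y⁆ = br (u x) (u y)) ∧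
     (∀ p q p' q', s p = t q → s p' = t q' →
       s (br p p') = t (br q q') ∧ m (br p p') (br q q') = br (m p q) (m p' q'))) := by
  refine ⟨⟨?_, ?_, ?_⟩, ⟨?_, ?_, ?_, ?_, ?_, ?_, ?_, ?_⟩, ?_, ?_, ?_, ?_⟩
  · intro p
    simp [hbr, Prod.ext_iff]
  · intro p q
    simp only [hbr, Prod.neg_mk, Prod.ext_iff, ← lie_skew q.1 p.1, ← lie_skew q.2 p.2]
    constructor <;> abel
  · intro p q r
    simp only [hbr, Prod.ext_iff, Prod.fst_add, Prod.snd_add, map_add, map_sub, hder, hact,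
      LinearMap.sub_apply, lie_add, add_lie, lie_sub, sub_lie]
    constructor
    · rw [show ⁅p.1, ⁅q.1, r.1⁆⁆ = ⁅⁅p.1, q.1⁆, r.1⁆ + ⁅q.1, ⁅p.1, r.1⁆⁆ from leibniz_lie _ _ _,
        ← lie_skew ((ρ r.2) p.1) q.1]
      abel
    · exact leibniz_lie _ _ _
  · intro x; simp [hs, hu]
  · intro x; simp [ht, hu]
  · intro p q _; simp [hs, hm]
  · intro p q h
    simp only [hs, ht] at h ⊢
    simp [hm, map_add, h]
    abel
  · intro p; simp [hm, hu, hs]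
  · intro p; simp [hm, hu, ht]
  · intro p q r _ _; simp [hm, Prod.ext_iff]; abel
  · intro p
    refine ⟨(-p.1, φ p.1 + p.2), ?_, ?_, ?_, ?_⟩ <;>
      simp [hs, ht, hm, hu] <;> abel
  · intro p q; simp [hs, hbr]
  · intro p q
    simp only [ht, hbr, lie_add, add_lie]
    rw [map_sub φ, map_add φ, hequiv, hequiv, LieHom.map_lie, ← lie_skew (q.2) (φ p.1)]
    abel
  · intro x y; simp [hu, hbr]
  · intro p q p' q' h h'
    simp only [hs, ht] at h h'
    constructor
    · simp only [hs, ht, hbr, h, h', lie_add, add_lie]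
      rw [map_sub φ, map_add φ, hequiv, hequiv, LieHom.map_lie, ← lie_skew (q'.2) (φ q.1)]
      abel
    · simp only [hbr, hm, Prod.ext_iff, h, h', map_add, LinearMap.add_apply, hpeiffer,
        lie_add, add_lie]
      constructor
      · rw [← lie_skew q'.1 p.1]
        abel
      · trivial
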